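/- There is a Poisson-commutative subalgebra of polynomial functions on gl(N,ℝ)* containing, for each 1 ≤ k ≤ N, the k nontrivial coefficients of det(λ − u)_k; in particular the N(N+1)/2 functions {coefficients of det(λ−u)_k : 1 ≤ k ≤ N} pairwise Poisson-commute and their number equals N(N+1)/2. -/

import Mathlib

/-- The coordinate function `u^{ij}` on `gl(N,ℝ)*`. -/
noncomputable def u {N : ℕ} (i j : Fin N) : MvPolynomial (Fin N × Fin N) ℝ :=
  MvPolynomial.X (i, j)

/-- The Lie–Poisson bracket on polynomial functions on `gl(N,ℝ)*`. -/
noncomputable def pb {N : ℕ} (P Q : MvPolynomial (Fin N × Fin N) ℝ) :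
    MvPolynomial (Fin N × Fin N) ℝ :=
  ∑ i : Fin N, ∑ j : Fin N, ∑ k : Fin N, ∑ l : Fin N,
    MvPolynomial.pderiv (i, j) P * MvPolynomial.pderiv (k, l) Q *
      ((if j = k then u i l else 0) - (if l = i then u k j else 0))

/-- The matrix of coordinate functions `u = (u^{ij})`. -/
noncomputable def Umat (N : ℕ) :
    Matrix (Fin N) (Fin N) (MvPolynomial (Fin N × Fin N) ℝ) :=
  fun i j => u i j

/-- `I_k(λ) = det(λ − u)_k`, the k-th leading principal minor of `λ·Id − u`. -/
noncomputable def Ipoly {N : ℕ} (k : ℕ) (hk : k ≤ N) :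
    Polynomial (MvPolynomial (Fin N × Fin N) ℝ) :=
  (((Umat N).charmatrix).submatrix (Fin.castLE hk) (Fin.castLE hk)).det

namespace GTaux

open MvPolynomial Polynomial Matrix Finset

abbrev MA (N : ℕ) := MvPolynomial (Fin N × Fin N) ℝ

variable {N : ℕ}

/-- Coefficientwise partial derivative on `Polynomial (MA N)`. -/
noncomputable def dp (v : Fin N × Fin N) (p : Polynomial (MA N)) : Polynomial (MA N) :=
  PolynomialModule.equivPolynomialSelf ((MvPolynomial.pderiv (R := ℝ) v).mapCoeffs p)

lemma dp_coeff (v : Fin N × Fin N) (p : Polynomial (MA N)) (n : ℕ) :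
    (dp v p).coeff n = MvPolynomial.pderiv v (p.coeff n) := rfl

lemma dp_add (v : Fin N × Fin N) (p q : Polynomial (MA N)) :
    dp v (p + q) = dp v p + dp v q := by
  simp [dp]

lemma dp_mul (v : Fin N × Fin N) (p q : Polynomial (MA N)) :
    dp v (p * q) = p * dp v q + q * dp v p := by
  unfold dp
  rw [Derivation.leibniz, map_add, LinearEquiv.map_smul, LinearEquiv.map_smul,
    smul_eq_mul, smul_eq_mul]

lemma dp_sub (v : Fin N × Fin N) (p q : Polynomial (MA N)) :
    dp v (p - q) = dp v p - dp v q := by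
  unfold dp; rw [map_sub, map_sub]

lemma dp_zero (v : Fin N × Fin N) : dp v (0 : Polynomial (MA N)) = 0 := by
  unfold dp; rw [map_zero, map_zero]

/-- `dp` as an additive monoid hom. -/
noncomputable def dpHom (v : Fin N × Fin N) : Polynomial (MA N) →+ Polynomial (MA N) :=
  AddMonoidHom.mk' (dp v) (dp_add v)

section Ddet

variable {S : Type*} [CommRing S] {n : ℕ}

lemma D_one (D : S →+ S) (hmul : ∀ x y, D (x * y) = x * D y + y * D x) : D 1 = 0 := by
  have h := hmul 1 1
  simpa using h

lemma D_prod (D : S →+ S) (hmul : ∀ x y, D (x * y) = x * D y + y * D x)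
    {ι : Type*} [DecidableEq ι] (s : Finset ι) (f : ι → S) :
    D (∏ i ∈ s, f i) = ∑ j ∈ s, (∏ i ∈ s.erase j, f i) * D (f j) := by
  classical
  induction s using Finset.induction_on with
  | empty => simpa using D_one D hmul
  | insert _ _ ha ih =>
    rename_i a s
    rw [Finset.prod_insert ha, hmul, ih, Finset.sum_insert ha, Finset.erase_insert ha]
    rw [Finset.mul_sum, add_comm]
    congr 1
    refine Finset.sum_congr rfl fun j hj => ?_
    rw [Finset.erase_insert_of_ne (ne_of_mem_of_not_mem hj ha).symm,
      Finset.prod_insert (fun h => ha (Finset.mem_of_mem_erase h))]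
    ring

lemma D_det (D : S →+ S) (hmul : ∀ x y, D (x * y) = x * D y + y * D x)
    (M : Matrix (Fin n) (Fin n) S) :
    D M.det = ∑ j : Fin n, ∑ r : Fin n, M.adjugate j r * D (M r j) := by
  classical
  have hz : ∀ (z : ℤ) (x : S), D ((z : S) * x) = (z : S) * D x := fun z x => by
    rw [← zsmul_eq_mul, map_zsmul, zsmul_eq_mul]
  rw [Matrix.det_apply', map_sum]
  have lhs : ∀ σ : Equiv.Perm (Fin n),
      D ((((Equiv.Perm.sign σ : ℤˣ) : ℤ) : S) * ∏ i, M (σ i) i)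
        = ∑ j : Fin n, (((Equiv.Perm.sign σ : ℤˣ) : ℤ) : S) *
            ((∏ i ∈ Finset.univ.erase j, M (σ i) i) * D (M (σ j) j)) := by
    intro σ
    rw [hz, D_prod D hmul, Finset.mul_sum]
  simp_rw [lhs]
  rw [Finset.sum_comm]
  refine Finset.sum_congr rfl fun j _ => ?_
  have hcr : ∑ r, M.adjugate j r * D (M r j) = Matrix.cramer M (fun r => D (M r j)) j := by
    rw [Matrix.cramer_eq_adjugate_mulVec]
    rfl
  rw [hcr, Matrix.cramer_apply, Matrix.det_apply']
  refine Finset.sum_congr rfl fun σ _ => ?_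
  rw [← Finset.mul_prod_erase Finset.univ _ (Finset.mem_univ j)]
  have h1 : (M.updateCol j fun r => D (M r j)) (σ j) j = D (M (σ j) j) := by
    simp [Matrix.updateCol_apply]
  have h2 : ∏ i ∈ Finset.univ.erase j, (M.updateCol j fun r => D (M r j)) (σ i) i
      = ∏ i ∈ Finset.univ.erase j, M (σ i) i :=
    Finset.prod_congr rfl fun i hi => by
      rw [Matrix.updateCol_apply, if_neg (Finset.ne_of_mem_erase hi)]
  rw [h1, h2]
  ring

end Ddet

/-- The matrix whose determinant is `Ipoly l hl`. -/
noncomputable def Ml {l : ℕ} (hl : l ≤ N) : Matrix (Fin l) (Fin l) (Polynomial (MA N)) :=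
  ((Umat N).charmatrix).submatrix (Fin.castLE hl) (Fin.castLE hl)

lemma dp_X (v : Fin N × Fin N) : dp v (X : Polynomial (MA N)) = 0 := by
  ext n
  simp [dp_coeff, Polynomial.coeff_X, apply_ite (MvPolynomial.pderiv v)]

lemma dp_C (v : Fin N × Fin N) (a : MA N) : dp v (Polynomial.C a) = Polynomial.C (MvPolynomial.pderiv v a) := by
  ext n
  simp [dp_coeff, Polynomial.coeff_C, apply_ite (MvPolynomial.pderiv v)]

lemma dp_Ml {l : ℕ} (hl : l ≤ N) (v : Fin N × Fin N) (r s : Fin l) :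
    dp v (Ml (N := N) hl r s) =
      -Polynomial.C (if v = (Fin.castLE hl r, Fin.castLE hl s) then 1 else 0) := by
  have e : Ml (N := N) hl r s =
      Matrix.diagonal (fun _ => (Polynomial.X : Polynomial (MA N))) (Fin.castLE hl r)
        (Fin.castLE hl s) - Polynomial.C (u (Fin.castLE hl r) (Fin.castLE hl s)) := rfl
  rw [e, dp_sub, dp_C, Matrix.diagonal_apply, apply_ite (dp v), dp_X, dp_zero, ite_self,
    zero_sub]
  congr 1
  simp [u, MvPolynomial.pderiv_X, Pi.single_apply, eq_comm]

lemma Ipoly_eq (hl : l ≤ N) : Ipoly l hl = (Ml (N := N) hl).det := rfl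

lemma dp_Ipoly_zero {l : ℕ} (hl : l ≤ N) (p q : Fin N)
    (h : ¬((p : ℕ) < l ∧ (q : ℕ) < l)) :
    dp (p, q) (Ipoly l hl) = 0 := by
  rw [Ipoly_eq]
  have hd := D_det (dpHom (N := N) (p, q)) (fun x y => dp_mul _ x y) (Ml (N := N) hl)
  simp only [show ∀ x, dpHom (N := N) (p, q) x = dp (p, q) x from fun _ => rfl] at hd
  rw [hd]
  refine Finset.sum_eq_zero fun j _ => Finset.sum_eq_zero fun r _ => ?_
  rw [dp_Ml, if_neg, map_zero, neg_zero, mul_zero]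
  intro hc
  rw [Prod.mk.injEq] at hc
  refine h ⟨?_, ?_⟩
  · rw [hc.1]; simpa using r.isLt
  · rw [hc.2]; simpa using j.isLt

lemma dp_Ipoly {l : ℕ} (hl : l ≤ N) (p q : Fin l) :
    dp (Fin.castLE hl p, Fin.castLE hl q) (Ipoly l hl) = -(Ml (N := N) hl).adjugate q p := by
  rw [Ipoly_eq]
  have hd := D_det (dpHom (N := N) (Fin.castLE hl p, Fin.castLE hl q))
    (fun x y => dp_mul _ x y) (Ml (N := N) hl)
  simp only [show ∀ x, dpHom (N := N) (Fin.castLE hl p, Fin.castLE hl q) x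
      = dp (Fin.castLE hl p, Fin.castLE hl q) x from fun _ => rfl] at hd
  rw [hd]
  have key : ∀ j r : Fin l, (Ml (N := N) hl).adjugate j r *
      dp (Fin.castLE hl p, Fin.castLE hl q) (Ml (N := N) hl r j)
      = if q = j then (if p = r then -(Ml (N := N) hl).adjugate j r else 0) else 0 := by
    intro j r
    rw [dp_Ml]
    by_cases h1 : q = j <;> by_cases h2 : p = r <;>
      simp [h1, h2, Prod.ext_iff, Fin.castLE_inj, eq_comm] <;> ring
  simp_rw [key]
  simp

section PBlemmas

lemma sum_restrict {M : Type*} [AddCommMonoid M] {l : ℕ} (hl : l ≤ N) (f : Fin N → M)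
    (h : ∀ x : Fin N, ¬(x : ℕ) < l → f x = 0) :
    ∑ x : Fin N, f x = ∑ y : Fin l, f (Fin.castLE hl y) := by
  classical
  have hemb : ∑ y : Fin l, f (Fin.castLE hl y)
      = ∑ x ∈ Finset.univ.map ⟨Fin.castLE hl, Fin.castLE_injective hl⟩, f x := by
    rw [Finset.sum_map]
    rfl
  rw [hemb]
  refine (Finset.sum_subset (Finset.subset_univ _) fun x _ hx => h x fun hlt => hx ?_).symm
  exact Finset.mem_map.2 ⟨⟨(x : ℕ), hlt⟩, Finset.mem_univ _, Fin.ext rfl⟩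

lemma pb_add_left (P₁ P₂ Q : MA N) : pb (P₁ + P₂) Q = pb P₁ Q + pb P₂ Q := by
  simp only [pb, map_add, add_mul, Finset.sum_add_distrib]

lemma pb_add_right (P Q₁ Q₂ : MA N) : pb P (Q₁ + Q₂) = pb P Q₁ + pb P Q₂ := by
  simp only [pb, map_add, mul_add, add_mul, Finset.sum_add_distrib]

lemma pb_mul_left (P₁ P₂ Q : MA N) : pb (P₁ * P₂) Q = P₁ * pb P₂ Q + P₂ * pb P₁ Q := by
  simp only [pb, MvPolynomial.pderiv_mul, Finset.mul_sum, ← Finset.sum_add_distrib]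
  refine Finset.sum_congr rfl fun i _ => Finset.sum_congr rfl fun j _ =>
    Finset.sum_congr rfl fun k _ => Finset.sum_congr rfl fun m _ => ?_
  ring

lemma pb_mul_right (P Q₁ Q₂ : MA N) : pb P (Q₁ * Q₂) = Q₁ * pb P Q₂ + Q₂ * pb P Q₁ := by
  simp only [pb, MvPolynomial.pderiv_mul, Finset.mul_sum, ← Finset.sum_add_distrib]
  refine Finset.sum_congr rfl fun i _ => Finset.sum_congr rfl fun j _ =>
    Finset.sum_congr rfl fun k _ => Finset.sum_congr rfl fun m _ => ?_
  ring

lemma pb_algebraMap_left (r : ℝ) (Q : MA N) : pb (algebraMap ℝ (MA N) r) Q = 0 := by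
  simp [pb, MvPolynomial.algebraMap_eq]

lemma pb_algebraMap_right (r : ℝ) (P : MA N) : pb P (algebraMap ℝ (MA N) r) = 0 := by
  simp [pb, MvPolynomial.algebraMap_eq]

lemma pb_expand (P Q : MA N) : pb P Q = ∑ p : Fin N × Fin N, ∑ q : Fin N × Fin N,
    MvPolynomial.pderiv p P * MvPolynomial.pderiv q Q *
      ((if p.2 = q.1 then u p.1 q.2 else 0) - (if q.2 = p.1 then u q.1 p.2 else 0)) := by
  rw [pb]
  simp only [Fintype.sum_prod_type]

lemma pb_antisymm (P Q : MA N) : pb P Q = -pb Q P := by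
  rw [pb_expand P Q, pb_expand Q P, Finset.sum_comm]
  rw [← Finset.sum_neg_distrib]
  refine Finset.sum_congr rfl fun q _ => ?_
  rw [← Finset.sum_neg_distrib]
  refine Finset.sum_congr rfl fun p _ => ?_
  ring

end PBlemmas

section Casimir

lemma inner_key {l : ℕ} (hl : l ≤ N) (i j : Fin l) :
    ∑ m : Fin l, (Ml (N := N) hl).adjugate m j *
        Polynomial.C (u (Fin.castLE hl i) (Fin.castLE hl m))
      = ∑ k : Fin l, (Ml (N := N) hl).adjugate i k *
        Polynomial.C (u (Fin.castLE hl k) (Fin.castLE hl j)) := by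
  have hC : ∀ a b : Fin l, Polynomial.C (u (Fin.castLE hl a) (Fin.castLE hl b))
      = (if a = b then Polynomial.X else 0) - Ml (N := N) hl a b := by
    intro a b
    have e : Ml (N := N) hl a b =
        Matrix.diagonal (fun _ => (Polynomial.X : Polynomial (MA N))) (Fin.castLE hl a)
          (Fin.castLE hl b) - Polynomial.C (u (Fin.castLE hl a) (Fin.castLE hl b)) := rfl
    rw [e, Matrix.diagonal_apply]
    simp only [Fin.castLE_inj]
    ring
  simp_rw [hC, mul_sub, Finset.sum_sub_distrib]
  refine congrArg₂ (· - ·) ?_ ?_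
  · simp [mul_ite, Finset.sum_ite_eq, Finset.sum_ite_eq', mul_comm]
  · have h1 : ∑ m : Fin l, (Ml (N := N) hl).adjugate m j * Ml (N := N) hl i m
        = ((Ml (N := N) hl) * (Ml (N := N) hl).adjugate) i j := by
      rw [Matrix.mul_apply]
      exact Finset.sum_congr rfl fun _ _ => mul_comm _ _
    have h2 : ∑ k : Fin l, (Ml (N := N) hl).adjugate i k * Ml (N := N) hl k j
        = ((Ml (N := N) hl).adjugate * (Ml (N := N) hl)) i j := (Matrix.mul_apply).symm
    rw [h1, h2, Matrix.mul_adjugate, Matrix.adjugate_mul]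

lemma inner2 {l : ℕ} (hl : l ≤ N) (i j : Fin N) (hi : (i : ℕ) < l) (hj : (j : ℕ) < l) :
    ∑ k : Fin l, ∑ m : Fin l, -(Ml (N := N) hl).adjugate m k *
      Polynomial.C ((if j = Fin.castLE hl k then u i (Fin.castLE hl m) else 0)
        - (if Fin.castLE hl m = i then u (Fin.castLE hl k) j else 0)) = 0 := by
  have hii : Fin.castLE hl ⟨(i : ℕ), hi⟩ = i := Fin.ext rfl
  have hjj : Fin.castLE hl ⟨(j : ℕ), hj⟩ = j := Fin.ext rfl
  have hc1 : ∀ k : Fin l, (j = Fin.castLE hl k) = ((⟨(j : ℕ), hj⟩ : Fin l) = k) := by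
    intro k
    simp [Fin.ext_iff]
  have hc2 : ∀ m : Fin l, (Fin.castLE hl m = i) = (m = (⟨(i : ℕ), hi⟩ : Fin l)) := by
    intro m
    simp [Fin.ext_iff]
  simp only [hc1, hc2, map_sub, apply_ite Polynomial.C, map_zero, mul_sub,
    Finset.sum_sub_distrib]
  rw [sub_eq_zero, Finset.sum_comm]
  simp only [mul_ite, mul_zero, Finset.sum_ite_eq, Finset.sum_ite_eq', Finset.mem_univ, if_true]
  have h := inner_key (N := N) hl ⟨(i : ℕ), hi⟩ ⟨(j : ℕ), hj⟩
  rw [hii, hjj] at h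
  have e1 : (∑ x : Fin l, -(Ml (N := N) hl).adjugate x ⟨(j : ℕ), hj⟩ *
        Polynomial.C (u i (Fin.castLE hl x)))
      = -(∑ x : Fin l, (Ml (N := N) hl).adjugate x ⟨(j : ℕ), hj⟩ *
        Polynomial.C (u i (Fin.castLE hl x))) := by
    rw [← Finset.sum_neg_distrib]
    exact Finset.sum_congr rfl fun x _ => by ring
  have e2 : (∑ x : Fin l, -(Ml (N := N) hl).adjugate ⟨(i : ℕ), hi⟩ x *
        Polynomial.C (u (Fin.castLE hl x) j))
      = -(∑ x : Fin l, (Ml (N := N) hl).adjugate ⟨(i : ℕ), hi⟩ x *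
        Polynomial.C (u (Fin.castLE hl x) j)) := by
    rw [← Finset.sum_neg_distrib]
    exact Finset.sum_congr rfl fun x _ => by ring
  rw [e1, e2, h]

lemma cas {l : ℕ} (hl : l ≤ N) (P : MA N)
    (hP : ∀ i j : Fin N, ¬((i : ℕ) < l ∧ (j : ℕ) < l) → MvPolynomial.pderiv (i, j) P = 0)
    (n : ℕ) : pb P ((Ipoly l hl).coeff n) = 0 := by
  have step1 : pb P ((Ipoly l hl).coeff n)
      = Polynomial.coeff (∑ i : Fin N, ∑ j : Fin N, ∑ k : Fin N, ∑ m : Fin N,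
          Polynomial.C (MvPolynomial.pderiv (i, j) P) * dp (k, m) (Ipoly l hl) *
            Polynomial.C ((if j = k then u i m else 0) - (if m = i then u k j else 0))) n := by
    rw [pb]
    simp only [Polynomial.finset_sum_coeff]
    refine Finset.sum_congr rfl fun i _ => Finset.sum_congr rfl fun j _ =>
      Finset.sum_congr rfl fun k _ => Finset.sum_congr rfl fun m _ => ?_
    rw [Polynomial.coeff_mul_C, Polynomial.coeff_C_mul, dp_coeff]
  rw [step1]
  have hbig : (∑ i : Fin N, ∑ j : Fin N, ∑ k : Fin N, ∑ m : Fin N,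
      Polynomial.C (MvPolynomial.pderiv (i, j) P) * dp (k, m) (Ipoly l hl) *
        Polynomial.C ((if j = k then u i m else 0) - (if m = i then u k j else 0)))
      = (0 : Polynomial (MA N)) := by
    refine Finset.sum_eq_zero fun i _ => Finset.sum_eq_zero fun j _ => ?_
    by_cases hij : (i : ℕ) < l ∧ (j : ℕ) < l
    · obtain ⟨hi, hj⟩ := hij
      rw [sum_restrict hl _ (fun k hk => Finset.sum_eq_zero fun m _ => by
        rw [dp_Ipoly_zero hl k m (fun hc => hk hc.1), mul_zero, zero_mul])]
      rw [Finset.sum_congr rfl (fun k _ => sum_restrict hl _ (fun m hm => by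
        rw [dp_Ipoly_zero hl _ m (fun hc => hm hc.2), mul_zero, zero_mul]))]
      simp_rw [dp_Ipoly hl, mul_assoc, ← Finset.mul_sum]
      rw [inner2 hl i j hi hj, mul_zero]
    · refine Finset.sum_eq_zero fun k _ => Finset.sum_eq_zero fun m _ => ?_
      rw [hP i j hij, map_zero, zero_mul, zero_mul]
  rw [hbig, Polynomial.coeff_zero]

end Casimir

lemma pderiv_Ipoly_coeff_zero {k : ℕ} (hk : k ≤ N) (i j : Fin N)
    (h : ¬((i : ℕ) < k ∧ (j : ℕ) < k)) (m : ℕ) :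
    MvPolynomial.pderiv (i, j) ((Ipoly k hk).coeff m) = 0 := by
  rw [← dp_coeff, dp_Ipoly_zero hk i j h, Polynomial.coeff_zero]

lemma main_le {k l : ℕ} (hk : k ≤ N) (hl : l ≤ N) (hkl : k ≤ l) (m n : ℕ) :
    pb ((Ipoly k hk).coeff m) ((Ipoly l hl).coeff n) = 0 :=
  cas hl _ (fun i j h => pderiv_Ipoly_coeff_zero hk i j
    (fun hc => h ⟨lt_of_lt_of_le hc.1 hkl, lt_of_lt_of_le hc.2 hkl⟩) m) n

lemma main {k l : ℕ} (hk : k ≤ N) (hl : l ≤ N) (m n : ℕ) :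
    pb ((Ipoly k hk).coeff m) ((Ipoly l hl).coeff n) = 0 := by
  rcases le_total k l with h | h
  · exact main_le hk hl h m n
  · rw [pb_antisymm, main_le hl hk h n m, neg_zero]

end GTaux

theorem poisson_commutative_subalgebra_and_count (N : ℕ) :
    (∃ S : Subalgebra ℝ (MvPolynomial (Fin N × Fin N) ℝ),
      (∀ p ∈ S, ∀ q ∈ S, pb p q = 0) ∧
      ∀ k : ℕ, ∀ hk1 : 1 ≤ k, ∀ hk : k ≤ N, ∀ m : ℕ,
        (Ipoly k hk).coeff m ∈ S) ∧
    ∑ k ∈ Finset.Icc 1 N, k = N * (N + 1) / 2 := by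
  constructor
  · refine ⟨Algebra.adjoin ℝ
      {x | ∃ (k : ℕ) (hk : k ≤ N) (m : ℕ), x = (Ipoly k hk).coeff m}, ?_, ?_⟩
    · intro p hp q hq
      refine Algebra.adjoin_induction₂ (fun x y hx hy => ?_)
        (fun r₁ r₂ => GTaux.pb_algebraMap_left _ _)
        (fun r x _ => GTaux.pb_algebraMap_left _ _)
        (fun r x _ => GTaux.pb_algebraMap_right _ _)
        (fun x y z _ _ _ h1 h2 => by rw [GTaux.pb_add_left, h1, h2, add_zero])
        (fun x y z _ _ _ h1 h2 => by rw [GTaux.pb_add_right, h1, h2, add_zero])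
        (fun x y z _ _ _ h1 h2 => by
          rw [GTaux.pb_mul_left, h1, h2, mul_zero, mul_zero, add_zero])
        (fun x y z _ _ _ h1 h2 => by
          rw [GTaux.pb_mul_right, h1, h2, mul_zero, mul_zero, add_zero])
        hp hq
      obtain ⟨k, hk, m, rfl⟩ := hx
      obtain ⟨l, hl, n, rfl⟩ := hy
      exact GTaux.main hk hl m n
    · intro k _ hkN m
      exact Algebra.subset_adjoin ⟨k, hkN, m, rfl⟩
  · have h2 : ∀ n : ℕ, 2 * ∑ k ∈ Finset.Icc 1 n, k = n * (n + 1) := by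
      intro n
      induction n with
      | zero => simp
      | succ n ih =>
        rw [Finset.sum_Icc_succ_top (by omega : 1 ≤ n + 1)]
        rw [Nat.mul_add, ih]
        ring
    rw [← h2 N, Nat.mul_div_cancel_left _ (by norm_num)]
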